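/- Let g(k) = Σ_{j=1}^N A_j λ_j^k with distinct nonzero λ_j ∈ ℂ and A_j ∈ ℂ, and let G_0, G_1 be the M×M Hankel matrices G_0 = (g(i+j))_{0≤i,j≤M−1}, G_1 = (g(i+j+1))_{0≤i,j≤M−1} with M ≥ N. If G_0 is invertible, then every λ_j is an eigenvalue of the matrix 𝔗 = G_1 G_0^{−1}. -/
import Mathlib


open Matrix

/-- Matrix-pencil / ESPRIT eigenvalue recovery: let `g k = Σ_j A_j λ_j^k` with
distinct nonzero `λ_j`, and let `G0, G1` be the `M × M` Hankel matrices
`G0 i j = g (i + j)`, `G1 i j = g (i + j + 1)` with `M ≥ N`. If `G0` is invertible,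
then every `λ_j` is an eigenvalue of `𝔗 = G1 * G0⁻¹`. -/
theorem stmt_17 (N M : ℕ) (hMN : N ≤ M)
    (lam : Fin N → ℂ) (hdist : Function.Injective lam) (hne : ∀ j, lam j ≠ 0)
    (A : Fin N → ℂ) (g : ℕ → ℂ) (hg : ∀ k, g k = ∑ j, A j * lam j ^ k)
    (G0 G1 : Matrix (Fin M) (Fin M) ℂ)
    (hG0 : ∀ i j : Fin M, G0 i j = g ((i : ℕ) + (j : ℕ)))
    (hG1 : ∀ i j : Fin M, G1 i j = g ((i : ℕ) + (j : ℕ) + 1))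
    (hinv : IsUnit G0.det) :
    ∀ j : Fin N, ∃ v : Fin M → ℂ, v ≠ 0 ∧ (G1 * G0⁻¹).mulVec v = lam j • v := by
  intro j
  classical
  have hN : 1 ≤ N := Nat.one_le_iff_ne_zero.mpr (by rintro rfl; exact j.elim0)
  have hinjOn : Set.InjOn lam (Finset.univ : Finset (Fin N)) := hdist.injOn
  set P : Polynomial ℂ := Lagrange.basis Finset.univ lam j with hP
  have hdegP : P.natDegree < M := by
    have := Lagrange.natDegree_basis hinjOn (Finset.mem_univ j)
    rw [hP, this, Finset.card_univ, Fintype.card_fin]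
    omega
  set w : Fin M → ℂ := fun m => P.coeff m with hw
  have heval : ∀ x : ℂ, ∑ m : Fin M, w m * x ^ (m : ℕ) = P.eval x := by
    intro x
    rw [Polynomial.eval_eq_sum_range' hdegP, Finset.sum_range]
  have hPk : ∀ k : Fin N, P.eval (lam k) = if k = j then 1 else 0 := by
    intro k
    by_cases h : k = j
    · subst h
      simp [hP, Lagrange.eval_basis_self hinjOn (Finset.mem_univ k)]
    · simp [h, hP, Lagrange.eval_basis_of_ne (Ne.symm h) (Finset.mem_univ k)]
  have hmul : ∀ t : ℕ, (∑ m : Fin M, g (t + (m : ℕ)) * w m) = A j * lam j ^ t := by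
    intro t
    calc ∑ m : Fin M, g (t + (m : ℕ)) * w m
        = ∑ m : Fin M, ∑ k : Fin N, A k * lam k ^ t * (w m * lam k ^ (m : ℕ)) := by
          refine Finset.sum_congr rfl fun m _ => ?_
          rw [hg, Finset.sum_mul]
          refine Finset.sum_congr rfl fun k _ => ?_
          rw [pow_add]; ring
      _ = ∑ k : Fin N, A k * lam k ^ t * (∑ m : Fin M, w m * lam k ^ (m : ℕ)) := by
          rw [Finset.sum_comm]
          exact Finset.sum_congr rfl fun k _ => (Finset.mul_sum _ _ _).symm
      _ = ∑ k : Fin N, A k * lam k ^ t * P.eval (lam k) := by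
          simp only [heval]
      _ = A j * lam j ^ t := by
          simp only [hPk, mul_ite, mul_one, mul_zero]
          simp
  have hG0w : ∀ i : Fin M, G0.mulVec w i = A j * lam j ^ (i : ℕ) := by
    intro i
    simp only [Matrix.mulVec, dotProduct, hG0]
    exact hmul (i : ℕ)
  have hG1w : ∀ i : Fin M, G1.mulVec w i = lam j * (A j * lam j ^ (i : ℕ)) := by
    intro i
    simp only [Matrix.mulVec, dotProduct, hG1]
    have : ∀ m : Fin M, (i : ℕ) + (m : ℕ) + 1 = ((i : ℕ) + 1) + (m : ℕ) := by omega
    calc ∑ m : Fin M, g ((i : ℕ) + (m : ℕ) + 1) * w m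
        = ∑ m : Fin M, g (((i : ℕ) + 1) + (m : ℕ)) * w m := by
          refine Finset.sum_congr rfl fun m _ => ?_; rw [this m]
      _ = A j * lam j ^ ((i : ℕ) + 1) := hmul _
      _ = lam j * (A j * lam j ^ (i : ℕ)) := by rw [pow_succ]; ring
  refine ⟨G0.mulVec w, ?_, ?_⟩
  · intro hv0
    have hw0 : w = 0 := by
      have := congrArg (G0⁻¹.mulVec) hv0
      rwa [Matrix.mulVec_mulVec, Matrix.nonsing_inv_mul G0 hinv, Matrix.one_mulVec,
        Matrix.mulVec_zero] at this
    have h1 : P.eval (lam j) = 1 := by rw [hPk j]; simp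
    rw [← heval (lam j), hw0] at h1
    simp at h1
  · have hcancel : G1 * G0⁻¹ * G0 = G1 := by
      rw [mul_assoc, Matrix.nonsing_inv_mul G0 hinv, mul_one]
    rw [Matrix.mulVec_mulVec, hcancel]
    funext i
    simp only [Pi.smul_apply, smul_eq_mul, hG1w i, hG0w i]
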